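/- In the metric voting setting, if for all partitions C = I ⊔ J with i* ∈ I and j* ∈ J it holds that min_{i∈I} s_{i≻j*} ≤ λ · max_{j∈J} s_{j≻i*}, then SC(j*) ≤ (1 + 2λ)·SC(i*). -/

import Mathlib

open MeasureTheory in
lemma layercake_aux {V U : Type*} [Fintype V] [Fintype U]
    (X : V → ℝ) (M : U → ℝ) (lam : ℝ) (hlam : 0 ≤ lam)
    (hX : ∀ v, 0 ≤ X v) (_hM : ∀ u, 0 ≤ M u)
    (hcut : ∀ θ : ℝ, 0 < θ →
      ((Finset.univ.filter fun v => θ < X v).card : ℝ) ≤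
        lam * ((Finset.univ.filter fun u => θ < M u).card : ℝ)) :
    ∑ v, X v ≤ lam * ∑ u, M u := by
  classical
  have hind : ∀ Y : ℝ, 0 ≤ Y →
      (∫ θ : ℝ, (Set.Ioo (0:ℝ) Y).indicator (fun _ => (1:ℝ)) θ) = Y := by
    intro Y hY
    rw [MeasureTheory.integral_indicator_const (1:ℝ) measurableSet_Ioo]
    simp [Real.volume_Ioo, ENNReal.toReal_ofReal hY, hY]
  have hint : ∀ Y : ℝ,
      MeasureTheory.Integrable ((Set.Ioo (0:ℝ) Y).indicator (fun _ => (1:ℝ))) := by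
    intro Y
    rw [MeasureTheory.integrable_indicator_iff measurableSet_Ioo]
    exact MeasureTheory.integrableOn_const (by
      simp [Real.volume_Ioo])
  have hXsum : ∑ v, X v
      = ∫ θ : ℝ, ∑ v, (Set.Ioo (0:ℝ) (X v)).indicator (fun _ => (1:ℝ)) θ := by
    rw [MeasureTheory.integral_finset_sum _ (fun v _ => hint (X v))]
    exact Finset.sum_congr rfl fun v _ => (hind (X v) (hX v)).symm
  have hMsum : ∑ u, M u
      = ∫ θ : ℝ, ∑ u, (Set.Ioo (0:ℝ) (M u)).indicator (fun _ => (1:ℝ)) θ := by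
    rw [MeasureTheory.integral_finset_sum _ (fun u _ => hint (M u))]
    exact Finset.sum_congr rfl fun u _ => (hind (M u) (_hM u)).symm
  have hindval : ∀ (Y θ : ℝ),
      (Set.Ioo (0:ℝ) Y).indicator (fun _ => (1:ℝ)) θ
        = if 0 < θ ∧ θ < Y then 1 else 0 := by
    intro Y θ
    simp [Set.indicator_apply, Set.mem_Ioo]
  have hmono : ∀ θ : ℝ,
      (∑ v, (Set.Ioo (0:ℝ) (X v)).indicator (fun _ => (1:ℝ)) θ)
        ≤ lam * ∑ u, (Set.Ioo (0:ℝ) (M u)).indicator (fun _ => (1:ℝ)) θ := by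
    intro θ
    by_cases hθ : 0 < θ
    · have hl : (∑ v, (Set.Ioo (0:ℝ) (X v)).indicator (fun _ => (1:ℝ)) θ)
          = ((Finset.univ.filter fun v => θ < X v).card : ℝ) := by
        rw [← Finset.sum_boole]
        exact Finset.sum_congr rfl fun v _ => by
          rw [hindval]; simp [hθ]
      have hr : (∑ u, (Set.Ioo (0:ℝ) (M u)).indicator (fun _ => (1:ℝ)) θ)
          = ((Finset.univ.filter fun u => θ < M u).card : ℝ) := by
        rw [← Finset.sum_boole]
        exact Finset.sum_congr rfl fun u _ => by
          rw [hindval]; simp [hθ]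
      rw [hl, hr]
      exact hcut θ hθ
    · have hl : (∑ v, (Set.Ioo (0:ℝ) (X v)).indicator (fun _ => (1:ℝ)) θ) = 0 := by
        refine Finset.sum_eq_zero fun v _ => ?_
        rw [hindval]; simp [hθ]
      rw [hl]
      refine mul_nonneg hlam (Finset.sum_nonneg fun u _ => ?_)
      exact Set.indicator_nonneg (fun _ _ => zero_le_one) θ
  rw [hXsum, hMsum, ← MeasureTheory.integral_const_mul]
  refine MeasureTheory.integral_mono ?_ ?_ hmono
  · exact MeasureTheory.integrable_finset_sum _ (fun v _ => hint (X v))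
  · exact (MeasureTheory.integrable_finset_sum _ (fun u _ => hint (M u))).const_mul lam

/-- In the metric voting setting, if for all partitions `C = I ⊔ J` with
`i* ∈ I`, `j* ∈ J` we have `min_{i∈I} s_{i≻j*} ≤ λ · max_{j∈J} s_{j≻i*}`,
then `SC(j*) ≤ (1 + 2λ)·SC(i*)`. -/
theorem stmt13 {X V C : Type*} [PseudoMetricSpace X] [Fintype V] [Nonempty V]
    [Fintype C] [DecidableEq C]
    (vloc : V → X) (cloc : C → X)
    (pref : V → C → C → Prop) [∀ v, DecidableRel (pref v)]
    (htrans : ∀ v, Transitive (pref v))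
    (hirr : ∀ v a b, pref v a b → ¬ pref v b a)
    (htotal : ∀ v (a b : C), a ≠ b → pref v a b ∨ pref v b a)
    (hconsist : ∀ v a b, dist (vloc v) (cloc a) < dist (vloc v) (cloc b) → pref v a b)
    (s : C → C → ℝ)
    (hs : ∀ a b, s a b =
      ((Finset.univ.filter fun v => pref v a b).card : ℝ) / (Fintype.card V))
    (lam : ℝ) (hlam : 0 ≤ lam)
    (istar jstar : C)
    (h : ∀ I J : Finset C, I ∪ J = Finset.univ → Disjoint I J →
      ∀ (hi : istar ∈ I) (hj : jstar ∈ J),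
      (I.image fun i => s i jstar).min' (Finset.Nonempty.image ⟨istar, hi⟩ _) ≤
        lam * (J.image fun j => s j istar).max' (Finset.Nonempty.image ⟨jstar, hj⟩ _)) :
    ∑ v : V, dist (vloc v) (cloc jstar) ≤
      (1 + 2*lam) * ∑ v : V, dist (vloc v) (cloc istar) := by
  classical
  set n : ℕ := Fintype.card V with hn
  have hnpos : (0:ℝ) < n := by
    have := Fintype.card_pos (α := V)
    exact_mod_cast this
  set D : C → ℝ := fun c => dist (cloc istar) (cloc c) with hD
  -- weak preference implies weakly closer
  have hwk : ∀ v a b, pref v a b → dist (vloc v) (cloc a) ≤ dist (vloc v) (cloc b) := by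
    intro v a b hab
    by_contra hlt
    exact hirr v b a (hconsist v b a (lt_of_not_ge hlt)) hab
  -- compatibility sets and X
  set comp : V → Finset C := fun v =>
    insert jstar (Finset.univ.filter fun c => pref v jstar c) with hcomp
  have hjmem : ∀ v, jstar ∈ comp v := fun v => Finset.mem_insert_self _ _
  have hXne : ∀ v, ((comp v).image D).Nonempty :=
    fun v => Finset.Nonempty.image ⟨jstar, hjmem v⟩ _
  set Xv : V → ℝ := fun v => ((comp v).image D).min' (hXne v) with hXv
  -- supply sets and M
  set Bu : V → Finset C := fun u =>
    insert istar (Finset.univ.filter fun c => pref u c istar) with hBu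
  have hMne : ∀ u, ((Bu u).image D).Nonempty :=
    fun u => Finset.Nonempty.image ⟨istar, Finset.mem_insert_self _ _⟩ _
  set Mu : V → ℝ := fun u => ((Bu u).image D).max' (hMne u) with hMu
  -- basic bounds
  have hX0 : ∀ v, 0 ≤ Xv v := by
    intro v
    obtain ⟨c, _, hc⟩ := Finset.mem_image.mp (Finset.min'_mem _ (hXne v))
    have h0 : (0:ℝ) ≤ D c := dist_nonneg
    rw [hc] at h0
    exact h0
  have hXD : ∀ v, Xv v ≤ D jstar := by
    intro v
    exact Finset.min'_le _ _ (Finset.mem_image_of_mem D (hjmem v))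
  have hM0 : ∀ u, 0 ≤ Mu u := by
    intro u
    have : D istar ≤ Mu u :=
      Finset.le_max' _ _ (Finset.mem_image_of_mem D (Finset.mem_insert_self _ _))
    simpa [hD] using this
  have hM2 : ∀ u, Mu u ≤ 2 * dist (vloc u) (cloc istar) := by
    intro u
    refine Finset.max'_le _ _ _ ?_
    intro y hy
    obtain ⟨c, hcmem, hc⟩ := Finset.mem_image.mp hy
    rcases Finset.mem_insert.mp hcmem with hcl | hcl
    · have h0 : D c ≤ 2 * dist (vloc u) (cloc istar) := by
        rw [hcl]
        simp only [hD, dist_self]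
        positivity
      rw [hc] at h0
      exact h0
    · have hpc : pref u c istar := (Finset.mem_filter.mp hcl).2
      have h1 : dist (vloc u) (cloc c) ≤ dist (vloc u) (cloc istar) := hwk u c istar hpc
      have h2 : D c ≤ dist (cloc istar) (vloc u) + dist (vloc u) (cloc c) :=
        dist_triangle _ _ _
      rw [dist_comm (cloc istar) (vloc u)] at h2
      have h0 : D c ≤ 2 * dist (vloc u) (cloc istar) := by linarith
      rw [hc] at h0
      exact h0
  -- per-voter bound
  have hA : ∀ v, dist (vloc v) (cloc jstar) ≤ dist (vloc v) (cloc istar) + Xv v := by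
    intro v
    obtain ⟨c, hcmem, hc⟩ := Finset.mem_image.mp (Finset.min'_mem _ (hXne v))
    rcases Finset.mem_insert.mp hcmem with hcl | hcl
    · have h0 : dist (vloc v) (cloc jstar) ≤ dist (vloc v) (cloc istar) + D c := by
        rw [hcl]
        exact dist_triangle _ _ _
      rw [hc] at h0
      exact h0
    · have hpc : pref v jstar c := (Finset.mem_filter.mp hcl).2
      have h1 : dist (vloc v) (cloc jstar) ≤ dist (vloc v) (cloc c) := hwk v jstar c hpc
      have h2 : dist (vloc v) (cloc c) ≤ dist (vloc v) (cloc istar) + D c :=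
        dist_triangle _ _ _
      have h0 : dist (vloc v) (cloc jstar) ≤ dist (vloc v) (cloc istar) + D c := by linarith
      rw [hc] at h0
      exact h0
  -- the cut condition
  have hcut : ∀ θ : ℝ, 0 < θ →
      ((Finset.univ.filter fun v => θ < Xv v).card : ℝ) ≤
        lam * ((Finset.univ.filter fun u => θ < Mu u).card : ℝ) := by
    intro θ hθ
    rcases (Finset.univ.filter fun v => θ < Xv v).eq_empty_or_nonempty with hemp | ⟨v₀, hv₀⟩
    · rw [hemp]
      simp only [Finset.card_empty, Nat.cast_zero]
      positivity
    · have hv₀' : θ < Xv v₀ := (Finset.mem_filter.mp hv₀).2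
      set I : Finset C := Finset.univ.filter fun c => D c ≤ θ with hI
      set J : Finset C := Finset.univ.filter fun c => ¬ D c ≤ θ with hJ
      have hIJ : I ∪ J = Finset.univ := Finset.filter_union_filter_not_eq _ _
      have hdisj : Disjoint I J := Finset.disjoint_filter_filter_not _ _ _
      have hiI : istar ∈ I := by
        simp only [hI, Finset.mem_filter, Finset.mem_univ, true_and, hD, dist_self]
        linarith
      have hjJ : jstar ∈ J := by
        have : θ < D jstar := lt_of_lt_of_le hv₀' (hXD v₀)
        simp only [hJ, Finset.mem_filter, Finset.mem_univ, true_and]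
        linarith
      have hkey := h I J hIJ hdisj hiI hjJ
      obtain ⟨i₀, hi₀I, hi₀⟩ := Finset.mem_image.mp
        (Finset.min'_mem (I.image fun i => s i jstar) (Finset.Nonempty.image ⟨istar, hiI⟩ _))
      obtain ⟨j₀, hj₀J, hj₀⟩ := Finset.mem_image.mp
        (Finset.max'_mem (J.image fun j => s j istar) (Finset.Nonempty.image ⟨jstar, hjJ⟩ _))
      have hi₀D : D i₀ ≤ θ := (Finset.mem_filter.mp hi₀I).2
      have hj₀D : θ < D j₀ := lt_of_not_ge (Finset.mem_filter.mp hj₀J).2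
      have hne : i₀ ≠ jstar := by
        intro hEq
        subst hEq
        exact absurd hi₀D (Finset.mem_filter.mp hjJ).2
      -- subset on the X side
      have hsub1 : (Finset.univ.filter fun v => θ < Xv v) ⊆
          (Finset.univ.filter fun v => pref v i₀ jstar) := by
        intro v hv
        have hvX : θ < Xv v := (Finset.mem_filter.mp hv).2
        simp only [Finset.mem_filter, Finset.mem_univ, true_and]
        rcases htotal v i₀ jstar hne with hp | hp
        · exact hp
        · exfalso
          have : i₀ ∈ comp v := Finset.mem_insert_of_mem (by
            simp only [Finset.mem_filter, Finset.mem_univ, true_and]; exact hp)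
          have : Xv v ≤ D i₀ := Finset.min'_le _ _ (Finset.mem_image_of_mem D this)
          linarith
      -- subset on the M side
      have hsub2 : (Finset.univ.filter fun u => pref u j₀ istar) ⊆
          (Finset.univ.filter fun u => θ < Mu u) := by
        intro u hu
        have hp : pref u j₀ istar := (Finset.mem_filter.mp hu).2
        have : j₀ ∈ Bu u := Finset.mem_insert_of_mem (by
          simp only [Finset.mem_filter, Finset.mem_univ, true_and]; exact hp)
        have : D j₀ ≤ Mu u := Finset.le_max' _ _ (Finset.mem_image_of_mem D this)
        simp only [Finset.mem_filter, Finset.mem_univ, true_and]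
        linarith
      -- translate cards through s
      have hc1 : ((Finset.univ.filter fun v => θ < Xv v).card : ℝ) ≤ s i₀ jstar * n := by
        have := Finset.card_le_card hsub1
        have hcast : ((Finset.univ.filter fun v => θ < Xv v).card : ℝ) ≤
            ((Finset.univ.filter fun v => pref v i₀ jstar).card : ℝ) := by exact_mod_cast this
        rw [hs i₀ jstar]
        rw [div_mul_cancel₀]
        · exact hcast
        · exact ne_of_gt hnpos
      have hc2 : s j₀ istar * n ≤ ((Finset.univ.filter fun u => θ < Mu u).card : ℝ) := by
        have := Finset.card_le_card hsub2
        have hcast : ((Finset.univ.filter fun u => pref u j₀ istar).card : ℝ) ≤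
            ((Finset.univ.filter fun u => θ < Mu u).card : ℝ) := by exact_mod_cast this
        rw [hs j₀ istar, div_mul_cancel₀]
        · exact hcast
        · exact ne_of_gt hnpos
      have hmid : s i₀ jstar ≤ lam * s j₀ istar := by
        rw [hi₀, hj₀] at *
        exact hkey
      calc ((Finset.univ.filter fun v => θ < Xv v).card : ℝ)
          ≤ s i₀ jstar * n := hc1
        _ ≤ (lam * s j₀ istar) * n := by
            apply mul_le_mul_of_nonneg_right hmid (le_of_lt hnpos)
        _ = lam * (s j₀ istar * n) := by ring
        _ ≤ lam * ((Finset.univ.filter fun u => θ < Mu u).card : ℝ) :=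
            mul_le_mul_of_nonneg_left hc2 hlam
  -- apply layer cake
  have hlc : ∑ v : V, Xv v ≤ lam * ∑ u : V, Mu u :=
    layercake_aux Xv Mu lam hlam hX0 hM0 hcut
  have hMsum : ∑ u : V, Mu u ≤ ∑ u : V, 2 * dist (vloc u) (cloc istar) :=
    Finset.sum_le_sum fun u _ => hM2 u
  calc ∑ v : V, dist (vloc v) (cloc jstar)
      ≤ ∑ v : V, (dist (vloc v) (cloc istar) + Xv v) :=
        Finset.sum_le_sum fun v _ => hA v
    _ = (∑ v : V, dist (vloc v) (cloc istar)) + ∑ v : V, Xv v := by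
        rw [Finset.sum_add_distrib]
    _ ≤ (∑ v : V, dist (vloc v) (cloc istar)) + lam * ∑ u : V, Mu u := by linarith
    _ ≤ (∑ v : V, dist (vloc v) (cloc istar)) +
          lam * ∑ u : V, 2 * dist (vloc u) (cloc istar) := by
        have := mul_le_mul_of_nonneg_left hMsum hlam
        linarith
    _ = (1 + 2*lam) * ∑ v : V, dist (vloc v) (cloc istar) := by
        rw [Finset.mul_sum]
        rw [Finset.mul_sum]
        rw [← Finset.sum_add_distrib]
        exact Finset.sum_congr rfl fun v _ => by ring
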